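/- Under Assumptions (A5) and (A6), there exists a constant μ > 0 independent of n and an N ∈ ℕ such that Δ_w(n)/Δ_u(n) ≤ μ for all n ≥ N. -/

import Mathlib

open MeasureTheory ProbabilityTheory Matrix Filter

/-- The spectral norm of a real square matrix. -/
noncomputable def specNorm {n : ℕ} (A : Matrix (Fin n) (Fin n) ℝ) : ℝ :=
  ‖Matrix.toEuclideanCLM (𝕜 := ℝ) A‖

/-- The `‖·‖_∞` norm of a matrix: maximum absolute row sum. -/
noncomputable def rowSumNorm {n : ℕ} (A : Matrix (Fin n) (Fin n) ℝ) : ℝ :=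
  ⨆ i, ∑ j, |A i j|

/-- The adjacency matrix of the complete graph on the vertices of the ordered list `k.2`. -/
def completeSub {T : Type} {m : T → ℕ} (n : ℕ)
    (k : Σ t : T, Fin (m t) ↪ Fin n) : Matrix (Fin n) (Fin n) ℝ :=
  fun i j => if i ≠ j ∧ (∃ a, k.2 a = i) ∧ (∃ b, k.2 b = j) then 1 else 0

lemma completeSub_apply {T : Type} {m : T → ℕ} (n : ℕ)
    (k : Σ t : T, Fin (m t) ↪ Fin n) (i j : Fin n) :
    completeSub n k i j = if i ≠ j ∧ (∃ a, k.2 a = i) ∧ (∃ b, k.2 b = j) then 1 else 0 := rfl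

section AuxLemmas

open Finset

lemma card_compl_pair {M : ℕ} {a b : Fin M} (hab : a ≠ b) :
    (({a, b} : Finset (Fin M))ᶜ).card = M - 2 := by
  rw [Finset.card_compl, Finset.card_insert_of_notMem (by simp [hab]),
    Finset.card_singleton, Fintype.card_fin]

lemma card_ne_pair {N : ℕ} {i j : Fin N} (hij : i ≠ j) :
    Fintype.card {c : Fin N // c ≠ i ∧ c ≠ j} = N - 2 := by
  rw [Fintype.card_subtype]
  have h : Finset.univ.filter (fun c : Fin N => c ≠ i ∧ c ≠ j) = ({i, j} : Finset (Fin N))ᶜ := by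
    ext c; simp [not_or]
  rw [h, card_compl_pair hij]

lemma card_fixed_pair_le {M N : ℕ} (i j : Fin N) (a b : Fin M) (hab : a ≠ b) :
    Nat.card {L : Fin M ↪ Fin N // L a = i ∧ L b = j} ≤ N ^ (M - 2) := by
  classical
  set s : Finset (Fin M) := ({a, b} : Finset (Fin M))ᶜ with hs
  have hcard : s.card = M - 2 := card_compl_pair hab
  let iso := s.orderIsoOfFin hcard
  have hinj : Function.Injective
      (fun L : {L : Fin M ↪ Fin N // L a = i ∧ L b = j} =>
        (fun k : Fin (M - 2) => L.1 (iso k : Fin M))) := by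
    intro L L' hE
    apply Subtype.ext; apply Function.Embedding.ext
    intro c
    by_cases hca : c = a
    · rw [hca, L.2.1, L'.2.1]
    by_cases hcb : c = b
    · rw [hcb, L.2.2, L'.2.2]
    have hc : c ∈ s := by simp [hs, hca, hcb]
    have := congrFun hE (iso.symm ⟨c, hc⟩)
    simpa using this
  calc Nat.card {L : Fin M ↪ Fin N // L a = i ∧ L b = j}
      ≤ Nat.card (Fin (M - 2) → Fin N) := Nat.card_le_card_of_injective _ hinj
    _ = N ^ (M - 2) := by simp [Nat.card_fun]

lemma card_pair_mem_le {M N : ℕ} {i j : Fin N} (hij : i ≠ j) :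
    Nat.card {L : Fin M ↪ Fin N // (∃ a, L a = i) ∧ (∃ b, L b = j)} ≤ M * M * N ^ (M - 2) := by
  classical
  rw [Nat.card_eq_fintype_card, Fintype.card_subtype]
  have hsub : (univ.filter (fun L : Fin M ↪ Fin N => (∃ a, L a = i) ∧ (∃ b, L b = j))) ⊆
      (univ : Finset (Fin M × Fin M)).biUnion
        (fun q => univ.filter (fun L : Fin M ↪ Fin N => L q.1 = i ∧ L q.2 = j)) := by
    intro L hL
    simp only [mem_filter, mem_univ, true_and] at hL
    obtain ⟨⟨a, ha⟩, ⟨b, hb⟩⟩ := hL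
    simp only [mem_biUnion, mem_univ, mem_filter, true_and]
    exact ⟨(a, b), ha, hb⟩
  calc (univ.filter (fun L : Fin M ↪ Fin N => (∃ a, L a = i) ∧ (∃ b, L b = j))).card
      ≤ ((univ : Finset (Fin M × Fin M)).biUnion
        (fun q => univ.filter (fun L : Fin M ↪ Fin N => L q.1 = i ∧ L q.2 = j))).card :=
        Finset.card_le_card hsub
    _ ≤ ∑ q : Fin M × Fin M,
        (univ.filter (fun L : Fin M ↪ Fin N => L q.1 = i ∧ L q.2 = j)).card :=
        Finset.card_biUnion_le
    _ ≤ ∑ _q : Fin M × Fin M, N ^ (M - 2) := by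
        apply Finset.sum_le_sum
        intro q _
        by_cases hq : q.1 = q.2
        · have : (univ.filter (fun L : Fin M ↪ Fin N => L q.1 = i ∧ L q.2 = j)) = ∅ := by
            apply Finset.filter_false_of_mem
            rintro L - ⟨h1, h2⟩
            exact hij (h1 ▸ h2 ▸ (by rw [hq]))
          simp [this]
        · have := card_fixed_pair_le i j q.1 q.2 hq
          rwa [Nat.card_eq_fintype_card, Fintype.card_subtype] at this
    _ = M * M * N ^ (M - 2) := by simp [Fintype.card_fin, mul_assoc]

def extendEmb {M N : ℕ} (i j : Fin N)
    (E : Fin (M - 2) ↪ {x : Fin N // x ≠ i ∧ x ≠ j}) : Fin M → Fin N := fun c =>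
  if h0 : (c : ℕ) = 0 then i else if h1 : (c : ℕ) = 1 then j
  else (E ⟨(c : ℕ) - 2, by have := c.isLt; omega⟩).1

lemma extendEmb_zero {M N : ℕ} (i j : Fin N) (E : Fin (M - 2) ↪ {x : Fin N // x ≠ i ∧ x ≠ j})
    (c : Fin M) (hc : (c : ℕ) = 0) : extendEmb i j E c = i := by
  rw [extendEmb, dif_pos hc]

lemma extendEmb_one {M N : ℕ} (i j : Fin N) (E : Fin (M - 2) ↪ {x : Fin N // x ≠ i ∧ x ≠ j})
    (c : Fin M) (hc : (c : ℕ) = 1) : extendEmb i j E c = j := by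
  rw [extendEmb, dif_neg (by omega), dif_pos hc]

lemma extendEmb_rest {M N : ℕ} (i j : Fin N) (E : Fin (M - 2) ↪ {x : Fin N // x ≠ i ∧ x ≠ j})
    (c : Fin M) (hc0 : ¬ (c : ℕ) = 0) (hc1 : ¬ (c : ℕ) = 1) :
    extendEmb i j E c = (E ⟨(c : ℕ) - 2, by have := c.isLt; omega⟩).1 := by
  rw [extendEmb, dif_neg hc0, dif_neg hc1]

lemma extendEmb_eval {M N : ℕ} (i j : Fin N) (E : Fin (M - 2) ↪ {x : Fin N // x ≠ i ∧ x ≠ j})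
    (k : Fin (M - 2)) (hk : (k : ℕ) + 2 < M) :
    extendEmb i j E ⟨(k : ℕ) + 2, hk⟩ = (E k).1 := by
  rw [extendEmb_rest i j E ⟨(k : ℕ) + 2, hk⟩ (by simp) (by simp)]
  have hidx : (⟨((⟨(k : ℕ) + 2, hk⟩ : Fin M) : ℕ) - 2, by have := hk; omega⟩ : Fin (M - 2)) = k :=
    Fin.ext (by simp)
  rw [hidx]

lemma extendEmb_injective {M N : ℕ} {i j : Fin N} (hij : i ≠ j)
    (E : Fin (M - 2) ↪ {x : Fin N // x ≠ i ∧ x ≠ j}) :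
    Function.Injective (extendEmb i j E) := by
  intro c d hcd
  apply Fin.ext
  by_cases hc0 : (c : ℕ) = 0 <;> by_cases hd0 : (d : ℕ) = 0 <;>
    by_cases hc1 : (c : ℕ) = 1 <;> by_cases hd1 : (d : ℕ) = 1
  all_goals first | omega | skip
  all_goals (
    first
      | rw [extendEmb_zero i j E c hc0] at hcd
      | rw [extendEmb_one i j E c hc1] at hcd
      | rw [extendEmb_rest i j E c hc0 hc1] at hcd)
  all_goals (
    first
      | rw [extendEmb_zero i j E d hd0] at hcd
      | rw [extendEmb_one i j E d hd1] at hcd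
      | rw [extendEmb_rest i j E d hd0 hd1] at hcd)
  all_goals
    first
      | (exact absurd hcd hij)
      | (exact absurd hcd.symm hij)
      | (exact absurd hcd.symm (E _).2.1)
      | (exact absurd hcd (E _).2.1)
      | (exact absurd hcd.symm (E _).2.2)
      | (exact absurd hcd (E _).2.2)
      | (have := E.injective (Subtype.ext hcd); simp only [Fin.mk.injEq] at this; omega)

lemma card_pair_mem_ge {M N : ℕ} (hM : 2 ≤ M) {i j : Fin N} (hij : i ≠ j) :
    (N - 2).descFactorial (M - 2) ≤
      Nat.card {L : Fin M ↪ Fin N // (∃ a, L a = i) ∧ (∃ b, L b = j)} := by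
  classical
  have hΨinj : Function.Injective
      (fun E : Fin (M - 2) ↪ {x : Fin N // x ≠ i ∧ x ≠ j} =>
        (⟨⟨extendEmb i j E, extendEmb_injective hij E⟩,
          ⟨⟨0, by omega⟩, by exact extendEmb_zero i j E ⟨0, by omega⟩ rfl⟩,
          ⟨⟨1, by omega⟩, by exact extendEmb_one i j E ⟨1, by omega⟩ rfl⟩⟩ :
          {L : Fin M ↪ Fin N // (∃ a, L a = i) ∧ (∃ b, L b = j)})) := by
    intro E E' hE
    have hfun : extendEmb i j E = extendEmb i j E' :=
      congrArg (fun z : {L : Fin M ↪ Fin N // (∃ a, L a = i) ∧ (∃ b, L b = j)} =>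
        (z.1 : Fin M → Fin N)) hE
    apply Function.Embedding.ext
    intro k
    have hlt : (k : ℕ) + 2 < M := by have := k.isLt; omega
    have hk : (E k).1 = (E' k).1 :=
      (extendEmb_eval i j E k hlt).symm.trans
        ((congrFun hfun ⟨(k : ℕ) + 2, hlt⟩).trans (extendEmb_eval i j E' k hlt))
    exact Subtype.ext hk
  calc (N - 2).descFactorial (M - 2)
      = Nat.card (Fin (M - 2) ↪ {x : Fin N // x ≠ i ∧ x ≠ j}) := by
        rw [Nat.card_eq_fintype_card, Fintype.card_embedding_eq, card_ne_pair hij,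
          Fintype.card_fin]
    _ ≤ _ := Nat.card_le_card_of_injective _ hΨinj

end AuxLemmas

section AuxProb

variable {Ω : Type} [MeasurableSpace Ω] (μ : Measure Ω) [IsProbabilityMeasure μ]

lemma aux_integrable {f : Ω → ℝ} (hf : Measurable f) (C : ℝ) (hC : ∀ ω, |f ω| ≤ C) :
    Integrable f μ :=
  (integrable_const C).mono' hf.aestronglyMeasurable (Filter.Eventually.of_forall hC)

omit [IsProbabilityMeasure μ] in
lemma integral_of_01 {f : Ω → ℝ} (hf : Measurable f) (h01 : ∀ ω, f ω = 0 ∨ f ω = 1) :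
    ∫ ω, f ω ∂μ = (μ {ω | f ω = 1}).toReal := by
  have hset : MeasurableSet {ω | f ω = 1} := hf (measurableSet_singleton 1)
  have hfi : f = Set.indicator {ω | f ω = 1} (fun _ => (1:ℝ)) := by
    funext ω; rcases h01 ω with h | h <;> simp [Set.indicator_apply, h]
  rw [hfi, integral_indicator_const _ hset]; simp; rfl

omit [IsProbabilityMeasure μ] in
lemma expect_mul_indep {f g : Ω → ℝ} (hf : Measurable f) (hg : Measurable g)
    (hf01 : ∀ ω, f ω = 0 ∨ f ω = 1) (hg01 : ∀ ω, g ω = 0 ∨ g ω = 1)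
    (hind : IndepFun f g μ) :
    ∫ ω, f ω * g ω ∂μ = (μ {ω | f ω = 1}).toReal * (μ {ω | g ω = 1}).toReal := by
  have h01 : ∀ ω, f ω * g ω = 0 ∨ f ω * g ω = 1 := by
    intro ω; rcases hf01 ω with h | h <;> rcases hg01 ω with h' | h' <;> simp [h, h']
  rw [integral_of_01 μ (f := fun ω => f ω * g ω) (hf.mul hg) h01]
  have hset : {ω | f ω * g ω = 1} = f ⁻¹' {1} ∩ g ⁻¹' {1} := by
    ext ω; rcases hf01 ω with h | h <;> rcases hg01 ω with h' | h' <;>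
      simp [h, h']
  rw [hset, hind.measure_inter_preimage_eq_mul _ _ (measurableSet_singleton 1)
    (measurableSet_singleton 1), ENNReal.toReal_mul]
  rfl

variable {ι : Type} [Fintype ι] (x : ι → Ω → ℝ) (c : ι → ℝ)
  (hmeas : ∀ k, Measurable (x k)) (h01 : ∀ k ω, x k ω = 0 ∨ x k ω = 1)

include hmeas h01

omit [Fintype ι] in
lemma integrable_x (k : ι) : Integrable (x k) μ := by
  refine aux_integrable μ (hmeas k) 1 (fun ω => ?_)
  rcases h01 k ω with h | h <;> simp [h]

lemma integral_W :
    ∫ ω, ∑ k, x k ω * c k ∂μ = ∑ k, (μ {ω | x k ω = 1}).toReal * c k := by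
  rw [integral_finset_sum _ (fun k _ => (integrable_x μ x hmeas h01 k).mul_const (c k))]
  refine Finset.sum_congr rfl (fun k _ => ?_)
  rw [integral_mul_const, integral_of_01 μ (hmeas k) (h01 k)]

end AuxProb

lemma min_nat_bound (N : ℕ) : (3 * (N:ℝ) - (N:ℝ)^2)/2 ≤ min (N:ℝ) 1 := by
  match N with
  | 0 => norm_num
  | 1 => norm_num
  | (k+2) =>
    have h2 : (2:ℝ) ≤ ((k+2 : ℕ) : ℝ) := by push_cast; linarith [Nat.cast_nonneg (α := ℝ) k]
    rw [min_eq_right (by linarith)]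
    nlinarith

section AuxMin

variable {Ω : Type} [MeasurableSpace Ω] (μ : Measure Ω) [IsProbabilityMeasure μ]
variable {ι : Type} [Fintype ι] (x : ι → Ω → ℝ) (c : ι → ℝ)

lemma integral_minW
    (hmeas : ∀ k, Measurable (x k)) (h01 : ∀ k ω, x k ω = 0 ∨ x k ω = 1)
    (hc : ∀ k, c k = 0 ∨ c k = 1)
    (hind : ∀ k k', k ≠ k' → IndepFun (x k) (x k') μ) :
    (∑ k, (μ {ω | x k ω = 1}).toReal * c k) -
      (∑ k, (μ {ω | x k ω = 1}).toReal * c k)^2 / 2 ≤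
      ∫ ω, min (∑ k, x k ω * c k) 1 ∂μ := by
  classical
  set q : ι → ℝ := fun k => (μ {ω | x k ω = 1}).toReal with hq
  set S : ℝ := ∑ k, q k * c k with hS
  set W : Ω → ℝ := fun ω => ∑ k, x k ω * c k with hWdef
  have hterm : ∀ k ω, ∃ nk : ℕ, x k ω * c k = nk := by
    intro k ω
    rcases h01 k ω with h | h
    · exact ⟨0, by simp [h]⟩
    · rcases hc k with h' | h'
      · exact ⟨0, by simp [h']⟩
      · exact ⟨1, by simp [h, h']⟩
  have hWnat : ∀ ω, ∃ Nn : ℕ, W ω = Nn := by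
    intro ω
    choose g hg using fun k => hterm k ω
    exact ⟨∑ k, g k, by rw [hWdef]; push_cast; exact Finset.sum_congr rfl fun k _ => hg k⟩
  have hWmeas : Measurable W := by
    apply Finset.measurable_sum
    exact fun k _ => (hmeas k).mul_const (c k)
  have hintW : Integrable W μ :=
    integrable_finset_sum _ (fun k _ => (integrable_x μ x hmeas h01 k).mul_const (c k))
  have hintprod : ∀ k k' : ι,
      Integrable (fun ω => (x k ω * x k' ω) * (c k * c k')) μ := by
    intro k k'
    refine aux_integrable μ (((hmeas k).mul (hmeas k')).mul_const _) |c k * c k'| (fun ω => ?_)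
    rw [abs_mul]
    have : |x k ω * x k' ω| ≤ 1 := by
      rcases h01 k ω with h | h <;> rcases h01 k' ω with h' | h' <;> simp [h, h']
    nlinarith [abs_nonneg (c k * c k'), abs_nonneg (x k ω * x k' ω)]
  have hintW2 : Integrable (fun ω => W ω ^ 2) μ := by
    have hexp : (fun ω => W ω ^ 2) =
        fun ω => ∑ k, ∑ k', (x k ω * x k' ω) * (c k * c k') := by
      funext ω
      rw [hWdef, sq, Finset.sum_mul_sum]
      exact Finset.sum_congr rfl fun k _ => Finset.sum_congr rfl fun k' _ => by ring
    rw [hexp]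
    exact integrable_finset_sum _ (fun k _ => integrable_finset_sum _ (fun k' _ => hintprod k k'))
  have hEW2 : ∫ ω, W ω ^ 2 ∂μ ≤ S + S ^ 2 := by
    have hexp : ∫ ω, W ω ^ 2 ∂μ =
        ∑ k, ∑ k', (∫ ω, x k ω * x k' ω ∂μ) * (c k * c k') := by
      have hexp2 : (fun ω => W ω ^ 2) =
          fun ω => ∑ k, ∑ k', (x k ω * x k' ω) * (c k * c k') := by
        funext ω
        rw [hWdef, sq, Finset.sum_mul_sum]
        exact Finset.sum_congr rfl fun k _ => Finset.sum_congr rfl fun k' _ => by ring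
      rw [hexp2, integral_finset_sum _ (fun k _ => integrable_finset_sum _
        (fun k' _ => hintprod k k'))]
      refine Finset.sum_congr rfl fun k _ => ?_
      rw [integral_finset_sum _ (fun k' _ => hintprod k k')]
      exact Finset.sum_congr rfl fun k' _ => integral_mul_const _ _
    rw [hexp]
    have hbound : ∀ k k' : ι, (∫ ω, x k ω * x k' ω ∂μ) * (c k * c k') ≤
        (q k * c k) * (q k' * c k') + (if k = k' then q k * c k else 0) := by
      intro k k'
      by_cases hkk : k = k'
      · subst hkk
        have hxx : (fun ω => x k ω * x k ω) = x k := by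
          funext ω; rcases h01 k ω with h | h <;> simp [h]
        rw [if_pos rfl, hxx, integral_of_01 μ (hmeas k) (h01 k)]
        have hq0 : 0 ≤ q k := ENNReal.toReal_nonneg
        rcases hc k with h' | h' <;> simp [h'] <;> nlinarith
      · rw [if_neg hkk,
          expect_mul_indep μ (hmeas k) (hmeas k') (h01 k) (h01 k') (hind k k' hkk), add_zero]
        ring_nf
        exact le_of_eq (by ring)
    calc ∑ k, ∑ k', (∫ ω, x k ω * x k' ω ∂μ) * (c k * c k')
        ≤ ∑ k, ∑ k', ((q k * c k) * (q k' * c k') + (if k = k' then q k * c k else 0)) :=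
          Finset.sum_le_sum fun k _ => Finset.sum_le_sum fun k' _ => hbound k k'
      _ = S + S ^ 2 := by
          rw [Finset.sum_congr rfl (fun k _ => Finset.sum_add_distrib)]
          rw [Finset.sum_add_distrib]
          have hprod : ∑ k, ∑ k', (q k * c k) * (q k' * c k') = S ^ 2 := by
            rw [hS, sq, Finset.sum_mul_sum]
          have hdiag : ∑ k : ι, ∑ k' : ι, (if k = k' then q k * c k else 0) = S := by
            rw [hS]
            exact Finset.sum_congr rfl fun k _ => by simp [Finset.sum_ite_eq]
          rw [hprod, hdiag, add_comm]
  have hintmin : Integrable (fun ω => min (W ω) 1) μ := by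
    refine aux_integrable μ (hWmeas.min measurable_const) 1 (fun ω => ?_)
    obtain ⟨Nn, hNn⟩ := hWnat ω
    rw [hNn, abs_le]
    constructor
    · have : (0:ℝ) ≤ min (Nn:ℝ) 1 := le_min (Nat.cast_nonneg _) zero_le_one
      linarith
    · exact min_le_right _ _
  have hptwise : ∀ ω, (3 * W ω - W ω ^ 2)/2 ≤ min (W ω) 1 := by
    intro ω
    obtain ⟨Nn, hNn⟩ := hWnat ω
    rw [hNn]
    exact min_nat_bound Nn
  have hmono : ∫ ω, (3 * W ω - W ω ^ 2)/2 ∂μ ≤ ∫ ω, min (W ω) 1 ∂μ := by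
    refine integral_mono ?_ hintmin hptwise
    exact ((hintW.const_mul 3).sub hintW2).div_const 2
  have hEW : ∫ ω, W ω ∂μ = S := integral_W μ x c hmeas h01
  have hcalc : ∫ ω, (3 * W ω - W ω ^ 2)/2 ∂μ =
      (3 * S - ∫ ω, W ω ^ 2 ∂μ)/2 := by
    rw [integral_div, integral_sub (hintW.const_mul 3) hintW2, MeasureTheory.integral_const_mul, hEW]
  have := hcalc ▸ hmono
  linarith

end AuxMin

open Topology in
/-- Under (A5) and (A6), there is a constant `μ' > 0` independent of `n`
such that `Δ_w(n)/Δ_u(n) ≤ μ'` for all sufficiently large `n`. -/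
theorem deltaW_div_deltaU_bounded
    {T : Type} [Fintype T] [DecidableEq T] [Nonempty T]
    (m : T → ℕ) (hm2 : ∀ t, 2 ≤ m t)
    -- the generating probabilities p_n(t,L)
    (p : (n : ℕ) → (Σ t : T, Fin (m t) ↪ Fin n) → ℝ)
    (hp : ∀ n k, p n k ∈ Set.Icc (0 : ℝ) 1)
    -- the probability spaces and the independent Bernoulli families x(t,L)
    {Ω : ℕ → Type} [∀ n, MeasurableSpace (Ω n)]
    (μ : (n : ℕ) → Measure (Ω n)) [∀ n, IsProbabilityMeasure (μ n)]
    (x : (n : ℕ) → (Σ t : T, Fin (m t) ↪ Fin n) → Ω n → ℝ)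
    (hxmeas : ∀ n k, Measurable (x n k))
    (hx01 : ∀ n k ω, x n k ω = 0 ∨ x n k ω = 1)
    (hxp : ∀ n k, μ n {ω | x n k ω = 1} = ENNReal.ofReal (p n k))
    (hindep : ∀ n, iIndepFun (x n) (μ n))
    -- the weighted adjacency matrix, its expectation, and Δ_w
    (Aw : (n : ℕ) → Ω n → Matrix (Fin n) (Fin n) ℝ)
    (hAw : ∀ n ω, Aw n ω = ∑ k, x n k ω • completeSub n k)
    (EAw : (n : ℕ) → Matrix (Fin n) (Fin n) ℝ)
    (hEAw : ∀ n i j, EAw n i j = ∫ ω, Aw n ω i j ∂(μ n))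
    (Δw : ℕ → ℝ) (hΔw : ∀ n, Δw n = rowSumNorm (EAw n))
    -- the unweighted adjacency matrix, its expectation, and Δ_u
    (Au : (n : ℕ) → Ω n → Matrix (Fin n) (Fin n) ℝ)
    (hAu : ∀ n ω i j, Au n ω i j = min (Aw n ω i j) 1)
    (EAu : (n : ℕ) → Matrix (Fin n) (Fin n) ℝ)
    (hEAu : ∀ n i j, EAu n i j = ∫ ω, Au n ω i j ∂(μ n))
    (Δu : ℕ → ℝ) (hΔu : ∀ n, Δu n = rowSumNorm (EAu n))
    -- Assumption (A5)
    (h l u : T → ℝ)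
    (hl : ∀ t, 0 < l t) (hlu : ∀ t, l t < u t)
    (hh1 : ∀ t, (m t : ℝ) - 2 < h t) (hh2 : ∀ t, h t < (m t : ℝ) - 1)
    (hA5 : ∀ n k, p n k = 0 ∨
      ∃ b ∈ Set.Icc (l k.1) (u k.1), p n k = b / (n : ℝ) ^ (h k.1))
    -- Assumption (A6)
    (ξ : T → ℝ) (hξ : ∀ t, ξ t ∈ Set.Ioo (0 : ℝ) 1)
    (hA6a : ∀ (n : ℕ) (t : T),
      ξ t * (Nat.card (Fin (m t) ↪ Fin n) : ℝ) ≤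
        (Nat.card {L : Fin (m t) ↪ Fin n // 0 < p n ⟨t, L⟩} : ℝ))
    (hA6b : ∀ (n : ℕ) (t : T) (i j : Fin n),
      ξ t * (Nat.card {L : Fin (m t) ↪ Fin n // (∃ a, L a = i) ∧ (∃ b, L b = j)} : ℝ) ≤
        (Nat.card {L : Fin (m t) ↪ Fin n //
          ((∃ a, L a = i) ∧ (∃ b, L b = j)) ∧ 0 < p n ⟨t, L⟩} : ℝ))
    : ∃ (μ' : ℝ) (N : ℕ), 0 < μ' ∧ ∀ n : ℕ, N ≤ n → Δw n / Δu n ≤ μ' := by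
  classical
  -- basic facts
  have hu : ∀ t, 0 < u t := fun t => (hl t).trans (hlu t)
  have hc01 : ∀ (n : ℕ) (k : Σ t : T, Fin (m t) ↪ Fin n) (i j : Fin n),
      completeSub n k i j = 0 ∨ completeSub n k i j = 1 := by
    intro n k i j
    rw [completeSub_apply]
    split <;> simp
  have hq : ∀ n k, ((μ n) {ω | x n k ω = 1}).toReal = p n k := by
    intro n k
    rw [hxp n k, ENNReal.toReal_ofReal (hp n k).1]
  have hc_nonneg : ∀ (n : ℕ) (k : Σ t : T, Fin (m t) ↪ Fin n) (i j : Fin n),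
      0 ≤ completeSub n k i j := by
    intro n k i j
    rcases hc01 n k i j with h' | h' <;> rw [h'] <;> norm_num
  -- the entry mean S
  set S : (n : ℕ) → Fin n → Fin n → ℝ :=
    fun n i j => ∑ k, p n k * completeSub n k i j with hSdef
  have hAwfun : ∀ (n : ℕ) (ω : Ω n) (i j : Fin n),
      Aw n ω i j = ∑ k, x n k ω * completeSub n k i j := by
    intro n ω i j
    rw [hAw]
    simp [Matrix.sum_apply, Matrix.smul_apply, smul_eq_mul]
  have hEAwS : ∀ (n : ℕ) (i j : Fin n), EAw n i j = S n i j := by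
    intro n i j
    rw [hEAw]
    have h2 : (fun ω => Aw n ω i j) = fun ω => ∑ k, x n k ω * completeSub n k i j :=
      funext (fun ω => hAwfun n ω i j)
    rw [h2, integral_W (μ n) (x n) (fun k => completeSub n k i j) (hxmeas n) (hx01 n)]
    exact Finset.sum_congr rfl fun k _ => by rw [hq]
  have hS_nonneg : ∀ (n : ℕ) (i j : Fin n), 0 ≤ S n i j := by
    intro n i j
    refine Finset.sum_nonneg fun k _ => mul_nonneg (hp n k).1 ?_
    rcases hc01 n k i j with h' | h' <;> rw [h'] <;> norm_num
  have hS_diag : ∀ (n : ℕ) (i : Fin n), S n i i = 0 := by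
    intro n i
    refine Finset.sum_eq_zero fun k _ => ?_
    simp [completeSub_apply]
  have hEAuS : ∀ (n : ℕ) (i j : Fin n), S n i j - (S n i j)^2/2 ≤ EAu n i j := by
    intro n i j
    rw [hEAu]
    have h2 : (fun ω => Au n ω i j) =
        fun ω => min (∑ k, x n k ω * completeSub n k i j) 1 :=
      funext (fun ω => by rw [hAu, hAwfun])
    rw [h2]
    have := integral_minW (μ n) (x n) (fun k => completeSub n k i j) (hxmeas n) (hx01 n)
      (fun k => hc01 n k i j) (fun k k' hkk => (hindep n).indepFun hkk)
    have hrw : (∑ k, ((μ n) {ω | x n k ω = 1}).toReal * completeSub n k i j) = S n i j :=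
      Finset.sum_congr rfl fun k _ => by rw [hq]
    rwa [hrw] at this
  -- entry upper bound
  have hSB : ∀ n : ℕ, 1 ≤ n → ∀ i j : Fin n, i ≠ j →
      S n i j ≤ ∑ t, u t * (m t : ℝ)^2 * (n:ℝ) ^ ((m t : ℝ) - 2 - h t) := by
    intro n hn i j hij
    have hn0 : (0:ℝ) < n := by exact_mod_cast hn
    have hrp : ∀ t : T, (0:ℝ) < (n:ℝ) ^ (h t) := fun t => Real.rpow_pos_of_pos hn0 _
    have hple : ∀ k : (Σ t : T, Fin (m t) ↪ Fin n), p n k ≤ u k.1 / (n:ℝ) ^ (h k.1) := by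
      intro k
      rcases hA5 n k with h0 | ⟨b, hb, hpb⟩
      · rw [h0]
        have := (hu k.1).le
        positivity
      · rw [hpb]
        exact (div_le_div_iff_of_pos_right (hrp k.1)).mpr hb.2
    have hc_nonneg : ∀ (k : Σ t : T, Fin (m t) ↪ Fin n), 0 ≤ completeSub n k i j := by
      intro k
      rcases hc01 n k i j with h' | h' <;> rw [h'] <;> norm_num
    have hstep : ∀ t : T, ∑ L : Fin (m t) ↪ Fin n, p n ⟨t, L⟩ * completeSub n ⟨t, L⟩ i j ≤
        u t * (m t : ℝ)^2 * (n:ℝ) ^ ((m t : ℝ) - 2 - h t) := by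
      intro t
      have hcite : ∀ L : Fin (m t) ↪ Fin n, completeSub n ⟨t, L⟩ i j =
          if (∃ a, L a = i) ∧ (∃ b, L b = j) then (1:ℝ) else 0 := by
        intro L; rw [completeSub_apply]; simp [hij]
      have hcsum : ∑ L : Fin (m t) ↪ Fin n, completeSub n ⟨t, L⟩ i j =
          ((Nat.card {L : Fin (m t) ↪ Fin n // (∃ a, L a = i) ∧ (∃ b, L b = j)} : ℕ) : ℝ) := by
        rw [Finset.sum_congr rfl fun L _ => hcite L, Finset.sum_boole,
          Nat.card_eq_fintype_card, Fintype.card_subtype]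
      have hcast : ((n:ℝ)) ^ ((m t : ℝ) - 2) = ((n ^ (m t - 2) : ℕ) : ℝ) := by
        rw [Nat.cast_pow, ← Real.rpow_natCast (n:ℝ) (m t - 2)]
        congr 1
        rw [Nat.cast_sub (hm2 t)]
        norm_num
      calc ∑ L : Fin (m t) ↪ Fin n, p n ⟨t, L⟩ * completeSub n ⟨t, L⟩ i j
          ≤ ∑ L : Fin (m t) ↪ Fin n, (u t / (n:ℝ) ^ (h t)) * completeSub n ⟨t, L⟩ i j :=
            Finset.sum_le_sum fun L _ =>
              mul_le_mul_of_nonneg_right (hple ⟨t, L⟩) (hc_nonneg ⟨t, L⟩)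
        _ = (u t / (n:ℝ) ^ (h t)) * ∑ L : Fin (m t) ↪ Fin n, completeSub n ⟨t, L⟩ i j :=
            (Finset.mul_sum _ _ _).symm
        _ ≤ (u t / (n:ℝ) ^ (h t)) * ((m t * m t * n ^ (m t - 2) : ℕ) : ℝ) := by
            rw [hcsum]
            refine mul_le_mul_of_nonneg_left ?_ (by have hut := (hu t).le; positivity)
            exact_mod_cast card_pair_mem_le hij
        _ = u t * (m t : ℝ)^2 * (n:ℝ) ^ ((m t : ℝ) - 2 - h t) := by
            rw [Real.rpow_sub hn0, hcast]
            push_cast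
            ring
    calc S n i j = ∑ t : T, ∑ L : Fin (m t) ↪ Fin n, p n ⟨t, L⟩ * completeSub n ⟨t, L⟩ i j := by
          simp only [hSdef]
          rw [← Finset.univ_sigma_univ, Finset.sum_sigma]
      _ ≤ ∑ t, u t * (m t : ℝ)^2 * (n:ℝ) ^ ((m t : ℝ) - 2 - h t) :=
          Finset.sum_le_sum fun t _ => hstep t
  -- eventually the entry bound is at most 1
  obtain ⟨N1, hN1⟩ : ∃ N1 : ℕ, ∀ n : ℕ, N1 ≤ n →
      (∑ t, u t * (m t : ℝ)^2 * (n:ℝ) ^ ((m t : ℝ) - 2 - h t)) ≤ 1 := by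
    have hterm : ∀ t : T, Tendsto (fun v : ℝ => u t * (m t : ℝ)^2 * v ^ ((m t : ℝ) - 2 - h t))
        atTop (𝓝 0) := by
      intro t
      have hneg : 0 < h t - ((m t : ℝ) - 2) := by linarith [hh1 t]
      have hexp : ∀ v : ℝ, v ^ ((m t : ℝ) - 2 - h t) = v ^ (-(h t - ((m t : ℝ) - 2))) := by
        intro v; congr 1; ring
      have h1 := (tendsto_rpow_neg_atTop hneg).const_mul (u t * (m t : ℝ)^2)
      rw [mul_zero] at h1
      simp only [hexp]
      exact h1
    have hsum := tendsto_finset_sum Finset.univ (fun t (_ : t ∈ Finset.univ) => hterm t)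
    rw [Finset.sum_const_zero] at hsum
    have hnat := hsum.comp (tendsto_natCast_atTop_atTop (R := ℝ))
    have hev := hnat.eventually_lt_const one_pos
    obtain ⟨N1, hN1⟩ := Filter.eventually_atTop.mp hev
    exact ⟨N1, fun n hn => (hN1 n hn).le⟩
  -- choose the dominant type
  obtain ⟨t0, ht0⟩ : ∃ t0 : T, ∀ t : T, (m t : ℝ) - 1 - h t ≤ (m t0 : ℝ) - 1 - h t0 :=
    Finite.exists_max _
  -- entry lower bound
  have hSlow : ∀ n : ℕ, 1 ≤ n → ∀ i j : Fin n, i ≠ j →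
      l t0 * ξ t0 * (((n - 2).descFactorial (m t0 - 2) : ℕ) : ℝ) / (n:ℝ) ^ (h t0) ≤ S n i j := by
    intro n hn i j hij
    have hn0 : (0:ℝ) < n := by exact_mod_cast hn
    have hrp : (0:ℝ) < (n:ℝ) ^ (h t0) := Real.rpow_pos_of_pos hn0 _
    have hpge : ∀ L : Fin (m t0) ↪ Fin n, 0 < p n ⟨t0, L⟩ →
        l t0 / (n:ℝ) ^ (h t0) ≤ p n ⟨t0, L⟩ := by
      intro L hpos
      rcases hA5 n ⟨t0, L⟩ with h0 | ⟨b, hb, hpb⟩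
      · rw [h0] at hpos; exact absurd hpos (lt_irrefl 0)
      · rw [hpb]
        exact (div_le_div_iff_of_pos_right hrp).mpr hb.1
    have hstep1 : ((Finset.univ.filter (fun L : Fin (m t0) ↪ Fin n =>
          ((∃ a, L a = i) ∧ (∃ b, L b = j)) ∧ 0 < p n ⟨t0, L⟩)).card : ℝ) *
          (l t0 / (n:ℝ) ^ (h t0)) ≤
        ∑ L : Fin (m t0) ↪ Fin n, p n ⟨t0, L⟩ * completeSub n ⟨t0, L⟩ i j := by
      have hsub := Finset.sum_le_sum_of_subset_of_nonneg
        (Finset.filter_subset (fun L : Fin (m t0) ↪ Fin n =>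
          ((∃ a, L a = i) ∧ (∃ b, L b = j)) ∧ 0 < p n ⟨t0, L⟩) Finset.univ)
        (fun L _ _ => mul_nonneg (hp n ⟨t0, L⟩).1 (hc_nonneg n ⟨t0, L⟩ i j))
      refine le_trans ?_ hsub
      have hbd : ∀ L ∈ (Finset.univ.filter (fun L : Fin (m t0) ↪ Fin n =>
          ((∃ a, L a = i) ∧ (∃ b, L b = j)) ∧ 0 < p n ⟨t0, L⟩)),
          l t0 / (n:ℝ) ^ (h t0) ≤ p n ⟨t0, L⟩ * completeSub n ⟨t0, L⟩ i j := by
        intro L hL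
        rw [Finset.mem_filter] at hL
        obtain ⟨-, hQL⟩ := hL
        have hc1 : completeSub n ⟨t0, L⟩ i j = 1 := by
          rw [completeSub_apply, if_pos ⟨hij, hQL.1.1, hQL.1.2⟩]
        rw [hc1, mul_one]
        exact hpge L hQL.2
      have := Finset.card_nsmul_le_sum _ _ _ hbd
      simpa [nsmul_eq_mul] using this
    have hQcard : ((Finset.univ.filter (fun L : Fin (m t0) ↪ Fin n =>
          ((∃ a, L a = i) ∧ (∃ b, L b = j)) ∧ 0 < p n ⟨t0, L⟩)).card : ℝ) =
        ((Nat.card {L : Fin (m t0) ↪ Fin n //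
          ((∃ a, L a = i) ∧ (∃ b, L b = j)) ∧ 0 < p n ⟨t0, L⟩} : ℕ) : ℝ) := by
      rw [Nat.card_eq_fintype_card, Fintype.card_subtype]
    have hC2 := card_pair_mem_ge (hm2 t0) hij (N := n)
    have h1 : ξ t0 * (((n - 2).descFactorial (m t0 - 2) : ℕ) : ℝ) ≤
        ((Nat.card {L : Fin (m t0) ↪ Fin n //
          ((∃ a, L a = i) ∧ (∃ b, L b = j)) ∧ 0 < p n ⟨t0, L⟩} : ℕ) : ℝ) := by
      refine le_trans ?_ (hA6b n t0 i j)
      exact mul_le_mul_of_nonneg_left (by exact_mod_cast hC2) (hξ t0).1.le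
    have hchain : l t0 * ξ t0 * (((n - 2).descFactorial (m t0 - 2) : ℕ) : ℝ) / (n:ℝ) ^ (h t0) ≤
        ((Finset.univ.filter (fun L : Fin (m t0) ↪ Fin n =>
          ((∃ a, L a = i) ∧ (∃ b, L b = j)) ∧ 0 < p n ⟨t0, L⟩)).card : ℝ) *
          (l t0 / (n:ℝ) ^ (h t0)) := by
      rw [hQcard]
      calc l t0 * ξ t0 * (((n - 2).descFactorial (m t0 - 2) : ℕ) : ℝ) / (n:ℝ) ^ (h t0)
          = (ξ t0 * (((n - 2).descFactorial (m t0 - 2) : ℕ) : ℝ)) * (l t0 / (n:ℝ) ^ (h t0)) := by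
            ring
        _ ≤ _ := mul_le_mul_of_nonneg_right h1
              (by have := (hl t0).le; positivity)
    have houter : ∑ L : Fin (m t0) ↪ Fin n, p n ⟨t0, L⟩ * completeSub n ⟨t0, L⟩ i j ≤ S n i j := by
      simp only [hSdef]
      rw [← Finset.univ_sigma_univ, Finset.sum_sigma]
      exact Finset.single_le_sum
        (f := fun t => ∑ L : Fin (m t) ↪ Fin n, p n ⟨t, L⟩ * completeSub n ⟨t, L⟩ i j)
        (fun t _ => Finset.sum_nonneg fun L _ =>
          mul_nonneg (hp n ⟨t, L⟩).1 (hc_nonneg n ⟨t, L⟩ i j)) (Finset.mem_univ t0)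
    linarith [hchain, hstep1, houter]
  -- row sum upper bound for Δw
  have hΔwB : ∀ n : ℕ, 1 ≤ n →
      Δw n ≤ (n:ℝ) * ∑ t, u t * (m t : ℝ)^2 * (n:ℝ) ^ ((m t : ℝ) - 2 - h t) := by
    intro n hn
    have hne : Nonempty (Fin n) := ⟨⟨0, hn⟩⟩
    rw [hΔw, rowSumNorm]
    refine ciSup_le fun i => ?_
    calc ∑ j, |EAw n i j|
        ≤ ∑ _j : Fin n, (∑ t, u t * (m t : ℝ)^2 * (n:ℝ) ^ ((m t : ℝ) - 2 - h t)) := by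
          refine Finset.sum_le_sum fun j _ => ?_
          rw [hEAwS, abs_of_nonneg (hS_nonneg n i j)]
          by_cases hij : i = j
          · rw [hij, hS_diag]
            exact Finset.sum_nonneg fun t _ => by have := (hu t).le; positivity
          · exact hSB n hn i j hij
      _ = (n:ℝ) * ∑ t, u t * (m t : ℝ)^2 * (n:ℝ) ^ ((m t : ℝ) - 2 - h t) := by
          rw [Finset.sum_const, Finset.card_univ, Fintype.card_fin, nsmul_eq_mul]
  -- row sum lower bound for Δu
  have hΔuLB : ∀ n : ℕ, N1 ≤ n → 2 * m t0 ≤ n →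
      (l t0 * ξ t0 / 2 ^ (m t0)) * (n:ℝ) ^ ((m t0 : ℝ) - 1 - h t0) ≤ Δu n := by
    intro n hnN1 hnm
    have hm0 := hm2 t0
    have hn2 : 2 ≤ n := by omega
    have hn1 : 1 ≤ n := by omega
    have hn0 : (0:ℝ) < n := by exact_mod_cast hn1
    have hrp : (0:ℝ) < (n:ℝ) ^ (h t0) := Real.rpow_pos_of_pos hn0 _
    have hi0lt : 0 < n := hn1
    set i0 : Fin n := ⟨0, hi0lt⟩ with hi0
    have hdesc : ((n:ℝ)/2) ^ (m t0 - 2) ≤ (((n - 2).descFactorial (m t0 - 2) : ℕ) : ℝ) := by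
      have h1 : (n - m t0 + 1) ^ (m t0 - 2) ≤ (n - 2).descFactorial (m t0 - 2) := by
        have h2 := Nat.pow_sub_le_descFactorial (n - 2) (m t0 - 2)
        have heq : n - 2 + 1 - (m t0 - 2) = n - m t0 + 1 := by omega
        rwa [heq] at h2
      have h2 : (n:ℝ)/2 ≤ ((n - m t0 + 1 : ℕ) : ℝ) := by
        push_cast [Nat.cast_sub (show m t0 ≤ n by omega)]
        have h3 : (2 * m t0 : ℝ) ≤ (n : ℝ) := by exact_mod_cast hnm
        push_cast at h3
        linarith
      calc ((n:ℝ)/2) ^ (m t0 - 2)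
          ≤ (((n - m t0 + 1 : ℕ) : ℝ)) ^ (m t0 - 2) := by
            exact pow_le_pow_left₀ (by positivity) h2 _
        _ ≤ _ := by exact_mod_cast h1
    have hrow : ∀ j : Fin n, j ≠ i0 →
        l t0 * ξ t0 * (((n - 2).descFactorial (m t0 - 2) : ℕ) : ℝ) / (n:ℝ) ^ (h t0) / 2 ≤
          |EAu n i0 j| := by
      intro j hj
      have hij : i0 ≠ j := fun hh => hj hh.symm
      have hS1 : S n i0 j ≤ 1 := le_trans (hSB n hn1 i0 j hij) (hN1 n hnN1)
      have hS0 := hS_nonneg n i0 j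
      have hlow := hSlow n hn1 i0 j hij
      have hEA := hEAuS n i0 j
      have habs : EAu n i0 j ≤ |EAu n i0 j| := le_abs_self _
      nlinarith [mul_nonneg hS0 (sub_nonneg.mpr hS1)]
    have hsum : ((n - 1 : ℕ) : ℝ) *
        (l t0 * ξ t0 * (((n - 2).descFactorial (m t0 - 2) : ℕ) : ℝ) / (n:ℝ) ^ (h t0) / 2) ≤
        ∑ j, |EAu n i0 j| := by
      have h1 := Finset.card_nsmul_le_sum (Finset.univ.erase i0) (fun j => |EAu n i0 j|)
        _ (fun j hj => hrow j (Finset.ne_of_mem_erase hj))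
      rw [Finset.card_erase_of_mem (Finset.mem_univ i0), Finset.card_univ,
        Fintype.card_fin, nsmul_eq_mul] at h1
      refine le_trans h1 (Finset.sum_le_sum_of_subset_of_nonneg
        (Finset.subset_univ _) (fun j _ _ => abs_nonneg _))
    have hsup : ∑ j, |EAu n i0 j| ≤ Δu n := by
      rw [hΔu, rowSumNorm]
      exact le_ciSup (f := fun i : Fin n => ∑ j, |EAu n i j|) (Set.Finite.bddAbove (Set.finite_range _)) i0
    have hpow : (n:ℝ) ^ ((m t0 : ℝ) - 1 - h t0) =
        (n:ℝ) ^ ((m t0 - 1 : ℕ)) / (n:ℝ) ^ (h t0) := by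
      rw [Real.rpow_sub hn0]
      congr 1
      rw [← Real.rpow_natCast (n:ℝ) (m t0 - 1)]
      congr 1
      push_cast [Nat.cast_sub (by omega : 1 ≤ m t0)]
      ring
    have hn12 : (n:ℝ)/2 ≤ ((n - 1 : ℕ) : ℝ) := by
      push_cast [Nat.cast_sub (by omega : 1 ≤ n)]
      have h3 : (2:ℝ) ≤ (n:ℝ) := by exact_mod_cast hn2
      linarith
    have hkey : (l t0 * ξ t0 / 2 ^ (m t0)) * (n:ℝ) ^ (m t0 - 1 : ℕ) ≤
        ((n - 1 : ℕ) : ℝ) *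
          (l t0 * ξ t0 * (((n - 2).descFactorial (m t0 - 2) : ℕ) : ℝ)) / 2 := by
      have h2p : (2:ℝ) ^ (m t0) = (2:ℝ) ^ (m t0 - 2) * 4 := by
        rw [show m t0 = (m t0 - 2) + 2 by omega, pow_add]
        norm_num
      have e1 : (l t0 * ξ t0 / 2 ^ (m t0)) * (n:ℝ) ^ (m t0 - 1 : ℕ) =
          (l t0 * ξ t0 / 2) * (((n:ℝ)/2) * ((n:ℝ)/2) ^ (m t0 - 2)) := by
        rw [show m t0 - 1 = (m t0 - 2) + 1 by omega, pow_succ, div_pow, h2p]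
        field_simp
        ring
      rw [e1]
      have hlξ : (0:ℝ) ≤ l t0 * ξ t0 / 2 := by
        have := (hl t0).le; have := (hξ t0).1.le; positivity
      calc (l t0 * ξ t0 / 2) * (((n:ℝ)/2) * ((n:ℝ)/2) ^ (m t0 - 2))
          ≤ (l t0 * ξ t0 / 2) *
            (((n - 1 : ℕ) : ℝ) * (((n - 2).descFactorial (m t0 - 2) : ℕ) : ℝ)) := by
            refine mul_le_mul_of_nonneg_left ?_ hlξ
            exact mul_le_mul hn12 hdesc (by positivity) (le_trans (by positivity) hn12)
        _ = ((n - 1 : ℕ) : ℝ) *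
            (l t0 * ξ t0 * (((n - 2).descFactorial (m t0 - 2) : ℕ) : ℝ)) / 2 := by ring
    have hfinal : (l t0 * ξ t0 / 2 ^ (m t0)) * (n:ℝ) ^ ((m t0 : ℝ) - 1 - h t0) ≤
        ((n - 1 : ℕ) : ℝ) *
          (l t0 * ξ t0 * (((n - 2).descFactorial (m t0 - 2) : ℕ) : ℝ) / (n:ℝ) ^ (h t0) / 2) := by
      rw [hpow]
      calc (l t0 * ξ t0 / 2 ^ (m t0)) * ((n:ℝ) ^ (m t0 - 1 : ℕ) / (n:ℝ) ^ (h t0))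
          = ((l t0 * ξ t0 / 2 ^ (m t0)) * (n:ℝ) ^ (m t0 - 1 : ℕ)) / (n:ℝ) ^ (h t0) := by
            ring
        _ ≤ (((n - 1 : ℕ) : ℝ) *
            (l t0 * ξ t0 * (((n - 2).descFactorial (m t0 - 2) : ℕ) : ℝ)) / 2) / (n:ℝ) ^ (h t0) :=
            (div_le_div_iff_of_pos_right hrp).mpr hkey
        _ = ((n - 1 : ℕ) : ℝ) *
            (l t0 * ξ t0 * (((n - 2).descFactorial (m t0 - 2) : ℕ) : ℝ) / (n:ℝ) ^ (h t0) / 2) := by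
            ring
    exact le_trans hfinal (le_trans hsum hsup)
  -- final assembly
  have hCwpos : 0 < ∑ t, u t * (m t : ℝ)^2 :=
    Finset.sum_pos (fun t _ => mul_pos (hu t)
      (pow_pos (by exact_mod_cast (by have := hm2 t; omega : 0 < m t) : (0:ℝ) < (m t : ℝ)) 2))
      Finset.univ_nonempty
  have hc'pos : (0:ℝ) < l t0 * ξ t0 / 2 ^ (m t0) := by
    have := hl t0; have := (hξ t0).1; positivity
  refine ⟨(∑ t, u t * (m t : ℝ)^2) / (l t0 * ξ t0 / 2 ^ (m t0)),
    max N1 (2 * m t0 + 2), div_pos hCwpos hc'pos, ?_⟩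
  intro n hn
  have hnN1 : N1 ≤ n := le_trans (le_max_left _ _) hn
  have hnm : 2 * m t0 ≤ n := by
    have := le_trans (le_max_right _ _) hn; omega
  have hn1 : 1 ≤ n := by have := hm2 t0; omega
  have hn0 : (0:ℝ) < n := by exact_mod_cast hn1
  have hn1' : (1:ℝ) ≤ n := by exact_mod_cast hn1
  have hrp0 : 0 < (n:ℝ) ^ ((m t0 : ℝ) - 1 - h t0) := Real.rpow_pos_of_pos hn0 _
  have hup : Δw n ≤ (∑ t, u t * (m t : ℝ)^2) * (n:ℝ) ^ ((m t0 : ℝ) - 1 - h t0) := by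
    refine le_trans (hΔwB n hn1) ?_
    calc (n:ℝ) * ∑ t, u t * (m t : ℝ)^2 * (n:ℝ) ^ ((m t : ℝ) - 2 - h t)
        = ∑ t, u t * (m t : ℝ)^2 * ((n:ℝ) ^ ((m t : ℝ) - 2 - h t) * (n:ℝ)) := by
          rw [Finset.mul_sum]
          exact Finset.sum_congr rfl fun t _ => by ring
      _ ≤ ∑ t, u t * (m t : ℝ)^2 * (n:ℝ) ^ ((m t0 : ℝ) - 1 - h t0) := by
          refine Finset.sum_le_sum fun t _ => ?_
          have he : (n:ℝ) ^ ((m t : ℝ) - 2 - h t) * (n:ℝ) = (n:ℝ) ^ ((m t : ℝ) - 1 - h t) := by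
            rw [← Real.rpow_add_one (ne_of_gt hn0)]
            congr 1; ring
          rw [he]
          refine mul_le_mul_of_nonneg_left ?_ (by have := (hu t).le; positivity)
          exact Real.rpow_le_rpow_of_exponent_le hn1' (ht0 t)
      _ = (∑ t, u t * (m t : ℝ)^2) * (n:ℝ) ^ ((m t0 : ℝ) - 1 - h t0) := by
          rw [Finset.sum_mul]
  have hlo := hΔuLB n hnN1 hnm
  have hΔu_pos : 0 < Δu n := lt_of_lt_of_le (mul_pos hc'pos hrp0) hlo
  have hdiv : Δw n / Δu n ≤
      ((∑ t, u t * (m t : ℝ)^2) * (n:ℝ) ^ ((m t0 : ℝ) - 1 - h t0)) /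
        ((l t0 * ξ t0 / 2 ^ (m t0)) * (n:ℝ) ^ ((m t0 : ℝ) - 1 - h t0)) :=
    div_le_div₀ (mul_nonneg hCwpos.le hrp0.le) hup (mul_pos hc'pos hrp0) hlo
  rwa [mul_div_mul_right _ _ (ne_of_gt hrp0)] at hdiv
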